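/- In the high temperature region 2α·tanh(β) < 1, the quenched pressure differs from the symmetric pressure by a term of order 1/N: there is a constant C = C(α,β) with 0 ≤ A_N(α,β) − Ã_S(α,β) ≤ C/N for all N. -/

import Mathlib

open Filter Topology Finset

noncomputable section

/-- The value of an Ising spin encoded as a Boolean: `true ↦ +1`, `false ↦ -1`. -/
def spin (b : Bool) : ℝ := if b then 1 else -1

/-- The Hamiltonian of the dilute ferromagnet on `N` sites, given the list of `k`
random edges `e`: `H = -∑_{ν} σ_{i_ν} σ_{j_ν}`. -/
def ham (N k : ℕ) (e : Fin k → Fin N × Fin N) (σ : Fin N → Bool) : ℝ :=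
  -∑ ν : Fin k, spin (σ (e ν).1) * spin (σ (e ν).2)

/-- The partition function `Z_N(β)` for a given realization of the edges. -/
def partZ (N k : ℕ) (β : ℝ) (e : Fin k → Fin N × Fin N) : ℝ :=
  ∑ σ : Fin N → Bool, Real.exp (-β * ham N k e σ)

/-- The Gibbs (Boltzmann) expectation `Ω(O)` for a given realization of the edges. -/
def gibbs (N k : ℕ) (β : ℝ) (e : Fin k → Fin N × Fin N) (O : (Fin N → Bool) → ℝ) : ℝ :=
  (∑ σ : Fin N → Bool, Real.exp (-β * ham N k e σ) * O σ) / partZ N k β e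

/-- The Poisson probability weight `P(K = k) = e^{-ζ} ζ^k / k!`. -/
def poissonWeight (ζ : ℝ) (k : ℕ) : ℝ := Real.exp (-ζ) * ζ ^ k / (Nat.factorial k)

/-- The quenched expectation `𝔼`: average over the Poisson number `K` of edges
(of mean `α N`) and over the i.i.d. uniform random endpoints of the edges, of a
disorder-dependent quantity `F`. -/
def quenchedExp (N : ℕ) (α : ℝ) (F : (k : ℕ) → (Fin k → Fin N × Fin N) → ℝ) : ℝ :=
  ∑' k : ℕ, poissonWeight (α * N) k *
    ((∑ e : Fin k → Fin N × Fin N, F k e) / (N : ℝ) ^ (2 * k))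

/-- The magnetization `m(σ) = (1/N) ∑_i σ_i`. -/
def mag (N : ℕ) (σ : Fin N → Bool) : ℝ := (∑ i : Fin N, spin (σ i)) / N

/-- The quenched Gibbs average `⟨O⟩ = 𝔼 Ω(O)`. -/
def qGibbs (N : ℕ) (α β : ℝ) (O : (Fin N → Bool) → ℝ) : ℝ :=
  quenchedExp N α (fun k e => gibbs N k β e O)

/-- The quenched pressure `A_N(α,β) = (1/N) 𝔼 ln Z_N(β)`. -/
def pressure (N : ℕ) (α β : ℝ) : ℝ :=
  (quenchedExp N α (fun k e => Real.log (partZ N k β e))) / N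

def gmom (n : ℕ) : ℝ := (Nat.factorial (2*n) : ℝ) / (2^n * Nat.factorial n)

lemma two_pow_mul_factorial_le (n : ℕ) : 2^n * Nat.factorial n ≤ Nat.factorial (2*n) := by
  induction n with
  | zero => simp
  | succ n ih =>
    have h2 : 2*(n+1) = (2*n+1)+1 := by ring
    rw [h2, Nat.factorial_succ, Nat.factorial_succ]
    calc 2^(n+1) * ((n+1) * Nat.factorial n) = (2*(n+1)) * (2^n * Nat.factorial n) := by ring
      _ ≤ (2*(n+1)) * Nat.factorial (2*n) := by
          exact Nat.mul_le_mul_left _ ih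
      _ ≤ ((2*n+1)+1) * ((2*n+1) * Nat.factorial (2*n)) := by
          have : 2*(n+1) = (2*n+1)+1 := by ring
          rw [this]
          exact Nat.mul_le_mul_left _ (Nat.le_mul_of_pos_left _ (by omega))
      _ = ((2*n+1)+1) * ((2*n).succ * Nat.factorial (2*n)) := by norm_num
      _ = ((2*n+1)+1) * Nat.factorial (2*n+1) := by rw [Nat.factorial_succ]

lemma gmom_pos (n : ℕ) : 0 < gmom n := by
  apply div_pos (by positivity)
  positivity

lemma one_le_gmom (n : ℕ) : 1 ≤ gmom n := by
  rw [gmom, le_div_iff₀ (by positivity), one_mul]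
  have := two_pow_mul_factorial_le n
  calc ((2:ℝ)^n * Nat.factorial n) = ((2^n * Nat.factorial n : ℕ) : ℝ) := by push_cast; ring
    _ ≤ (Nat.factorial (2*n) : ℝ) := by exact_mod_cast this

lemma gmom_identity {k n : ℕ} (hk : k ≤ n) :
    ((2*n).choose (2*k) : ℝ) * gmom k * gmom (n-k) = gmom n * (n.choose k) := by
  have h1 : (2*n).choose (2*k) * Nat.factorial (2*k) * Nat.factorial (2*(n-k)) = Nat.factorial (2*n) := by
    have := Nat.choose_mul_factorial_mul_factorial (show 2*k ≤ 2*n by omega)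
    have e1 : 2*n - 2*k = 2*(n-k) := by omega
    rwa [e1] at this
  have h2 : n.choose k * Nat.factorial k * Nat.factorial (n-k) = Nat.factorial n :=
    Nat.choose_mul_factorial_mul_factorial hk
  have h1' : ((2*n).choose (2*k) : ℝ) * Nat.factorial (2*k) * Nat.factorial (2*(n-k)) = Nat.factorial (2*n) := by
    exact_mod_cast h1
  have h2' : (n.choose k : ℝ) * Nat.factorial k * Nat.factorial (n-k) = Nat.factorial n := by
    exact_mod_cast h2
  have hp : (2:ℝ)^k * 2^(n-k) = 2^n := by rw [← pow_add]; congr 1; omega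
  have hf : ∀ m : ℕ, (Nat.factorial m : ℝ) ≠ 0 := fun m => Nat.cast_ne_zero.mpr (Nat.factorial_ne_zero m)
  simp only [gmom]
  field_simp
  linear_combination (2^n * (Nat.factorial n:ℝ)) * h1' - ((Nat.factorial (2*n)):ℝ) * (2^k * 2^(n-k)) * h2' - ((Nat.factorial (2*n)):ℝ) * ((Nat.factorial n):ℝ) * hp

lemma spin_cases (b : Bool) : spin b = 1 ∨ spin b = -1 := by
  cases b <;> simp [spin]

lemma spin_pair_cases (a b : Bool) : spin a * spin b = 1 ∨ spin a * spin b = -1 := by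
  rcases spin_cases a with h | h <;> rcases spin_cases b with h' | h' <;> rw [h, h'] <;> norm_num

lemma exp_spin_pair (β : ℝ) (a b : Bool) :
    Real.exp (β * (spin a * spin b)) =
      Real.cosh β * (1 + Real.tanh β * (spin a * spin b)) := by
  have hc : Real.cosh β ≠ 0 := (Real.cosh_pos β).ne'
  rcases spin_pair_cases a b with h | h <;> rw [h]
  · have h2 : Real.cosh β * (1 + Real.tanh β * 1) = Real.cosh β + Real.sinh β := by
      rw [Real.tanh_eq_sinh_div_cosh]
      calc Real.cosh β * (1 + Real.sinh β / Real.cosh β * 1)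
          = Real.cosh β + Real.sinh β / Real.cosh β * Real.cosh β := by ring
        _ = Real.cosh β + Real.sinh β := by rw [div_mul_cancel₀ _ hc]
    rw [mul_one, h2, Real.cosh_add_sinh]
  · have h2 : Real.cosh β * (1 + Real.tanh β * -1) = Real.cosh β - Real.sinh β := by
      rw [Real.tanh_eq_sinh_div_cosh]
      calc Real.cosh β * (1 + Real.sinh β / Real.cosh β * -1)
          = Real.cosh β - Real.sinh β / Real.cosh β * Real.cosh β := by ring
        _ = Real.cosh β - Real.sinh β := by rw [div_mul_cancel₀ _ hc]
    rw [mul_neg_one, h2]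
    exact (Real.cosh_sub_sinh β).symm

def Qprod (N k : ℕ) (θ : ℝ) (e : Fin k → Fin N × Fin N) : ℝ :=
  ∑ σ : Fin N → Bool, ∏ ν : Fin k, (1 + θ * (spin (σ (e ν).1) * spin (σ (e ν).2)))

lemma partZ_eq (N k : ℕ) (β : ℝ) (e : Fin k → Fin N × Fin N) :
    partZ N k β e = Real.cosh β ^ k * Qprod N k (Real.tanh β) e := by
  rw [partZ, Qprod, Finset.mul_sum]
  apply Finset.sum_congr rfl
  intro σ _
  rw [ham, neg_mul_neg, Finset.mul_sum, Real.exp_sum]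
  rw [← Fin.prod_const k (Real.cosh β), ← Finset.prod_mul_distrib]
  apply Finset.prod_congr rfl
  intro ν _
  exact exp_spin_pair β _ _

lemma spin_pow_sum (m : ℕ) : ∑ b : Bool, spin b ^ m = 1 + (-1:ℝ)^m := by
  simp [spin, Fintype.sum_bool]

lemma spin_prod_multiset_nonneg (N : ℕ) (m : Multiset (Fin N)) :
    0 ≤ ∑ σ : Fin N → Bool, (m.map (fun i => spin (σ i))).prod := by
  have h : ∀ σ : Fin N → Bool, (m.map (fun i => spin (σ i))).prod
      = ∏ i : Fin N, spin (σ i) ^ (m.count i) := by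
    intro σ
    rw [Finset.prod_multiset_map_count]
    apply Finset.prod_subset (Finset.subset_univ _)
    intro i _ hi
    rw [Multiset.count_eq_zero_of_notMem (by simpa using hi), pow_zero]
  simp_rw [h]
  have swap := Finset.prod_univ_sum (fun _ : Fin N => (univ : Finset Bool))
    (fun i b => spin b ^ m.count i)
  rw [Fintype.piFinset_univ] at swap
  rw [← swap]
  apply Finset.prod_nonneg
  intro i _
  rw [spin_pow_sum]
  rcases Nat.even_or_odd (m.count i) with h | h
  · rw [h.neg_one_pow]; norm_num
  · rw [h.neg_one_pow]; norm_num

lemma sum_prod_pairs_nonneg (N k : ℕ) (e : Fin k → Fin N × Fin N) (u : Finset (Fin k)) :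
    0 ≤ ∑ σ : Fin N → Bool, ∏ ν ∈ u, (spin (σ (e ν).1) * spin (σ (e ν).2)) := by
  have h : ∀ σ : Fin N → Bool, ∏ ν ∈ u, (spin (σ (e ν).1) * spin (σ (e ν).2))
      = ((u.val.bind (fun ν => {(e ν).1, (e ν).2})).map (fun i => spin (σ i))).prod := by
    intro σ
    rw [Multiset.map_bind, Multiset.prod_bind, Finset.prod_eq_multiset_prod]
    apply congrArg
    apply Multiset.map_congr rfl
    intro ν _
    simp
  simp_rw [h]
  exact spin_prod_multiset_nonneg N _

lemma two_pow_le_Qprod (N k : ℕ) (θ : ℝ) (hθ : 0 ≤ θ) (e : Fin k → Fin N × Fin N) :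
    (2:ℝ)^N ≤ Qprod N k θ e := by
  have hexp : ∀ σ : Fin N → Bool,
      ∏ ν : Fin k, (1 + θ * (spin (σ (e ν).1) * spin (σ (e ν).2)))
      = ∑ t ∈ (univ : Finset (Fin k)).powerset,
          θ^(univ \ t).card * ∏ ν ∈ univ \ t, (spin (σ (e ν).1) * spin (σ (e ν).2)) := by
    intro σ
    rw [Finset.prod_add]
    apply Finset.sum_congr rfl
    intro t _
    rw [Finset.prod_const_one, one_mul]
    rw [← Finset.prod_const θ, ← Finset.prod_mul_distrib]
  rw [Qprod]
  simp_rw [hexp]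
  rw [Finset.sum_comm]
  have hterm : ∀ t : Finset (Fin k), t ∈ (univ : Finset (Fin k)).powerset →
      0 ≤ ∑ σ : Fin N → Bool, θ^(univ \ t).card * ∏ ν ∈ univ \ t, (spin (σ (e ν).1) * spin (σ (e ν).2)) := by
    intro t _
    rw [← Finset.mul_sum]
    exact mul_nonneg (pow_nonneg hθ _) (sum_prod_pairs_nonneg N k e _)
  have huniv : ∑ σ : Fin N → Bool, θ^((univ : Finset (Fin k)) \ univ).card
      * ∏ ν ∈ (univ : Finset (Fin k)) \ univ, (spin (σ (e ν).1) * spin (σ (e ν).2)) = 2^N := by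
    simp [Finset.sdiff_self]
  calc (2:ℝ)^N = _ := huniv.symm
    _ ≤ _ := Finset.single_le_sum hterm (Finset.mem_powerset_self _)

lemma moment_bound (N : ℕ) : ∀ n : ℕ,
    ∑ σ : Fin N → Bool, (∑ i, spin (σ i))^(2*n) ≤ 2^N * gmom n * N^n := by
  induction N with
  | zero =>
    intro n
    cases n with
    | zero => simp [gmom]
    | succ n =>
      simp only [Finset.univ_unique, Finset.sum_const, Finset.card_univ]
      simp [Finset.univ_eq_empty, pow_succ, gmom]
  | succ N ih =>
    intro n
    have hsplit : ∑ σ : Fin (N+1) → Bool, (∑ i, spin (σ i))^(2*n)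
        = ∑ p : Bool × (Fin N → Bool), (spin p.1 + ∑ i, spin (p.2 i))^(2*n) := by
      rw [← Equiv.sum_comp (Fin.consEquiv (fun _ : Fin (N+1) => Bool))
        (fun σ => (∑ i, spin (σ i))^(2*n))]
      apply Finset.sum_congr rfl
      intro p _
      congr 1
      rw [Fin.sum_univ_succ]
      simp [Fin.consEquiv]
    rw [hsplit, Fintype.sum_prod_type]
    have hexp : ∀ (b : Bool) (τ : Fin N → Bool),
        (spin b + ∑ i, spin (τ i))^(2*n)
        = ∑ j ∈ range (2*n+1), (∑ i, spin (τ i))^j * spin b^(2*n-j) * ((2*n).choose j) := by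
      intro b τ
      rw [add_comm]
      exact add_pow _ _ _
    simp_rw [hexp]
    have inner : ∑ b : Bool, ∑ τ : Fin N → Bool, ∑ j ∈ range (2*n+1),
          (∑ i, spin (τ i))^j * spin b^(2*n-j) * ((2*n).choose j)
        = ∑ j ∈ range (2*n+1), (∑ τ : Fin N → Bool, (∑ i, spin (τ i))^j)
            * ((1 + (-1:ℝ)^(2*n-j)) * ((2*n).choose j)) := by
      simp_rw [← spin_pow_sum]
      simp only [Finset.sum_mul, Finset.mul_sum]
      calc ∑ b : Bool, ∑ τ : Fin N → Bool, ∑ j ∈ range (2*n+1),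
              (∑ i, spin (τ i))^j * spin b^(2*n-j) * ((2*n).choose j)
          = ∑ τ : Fin N → Bool, ∑ b : Bool, ∑ j ∈ range (2*n+1),
              (∑ i, spin (τ i))^j * spin b^(2*n-j) * ((2*n).choose j) := Finset.sum_comm
        _ = ∑ τ : Fin N → Bool, ∑ j ∈ range (2*n+1), ∑ b : Bool,
              (∑ i, spin (τ i))^j * spin b^(2*n-j) * ((2*n).choose j) :=
            Finset.sum_congr rfl fun τ _ => Finset.sum_comm
        _ = ∑ j ∈ range (2*n+1), ∑ τ : Fin N → Bool, ∑ b : Bool,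
              (∑ i, spin (τ i))^j * spin b^(2*n-j) * ((2*n).choose j) := Finset.sum_comm
        _ = ∑ j ∈ range (2*n+1), ∑ b : Bool, ∑ τ : Fin N → Bool,
              (∑ i, spin (τ i))^j * spin b^(2*n-j) * ((2*n).choose j) :=
            Finset.sum_congr rfl fun j _ => Finset.sum_comm
        _ = ∑ j ∈ range (2*n+1), ∑ b : Bool, ∑ τ : Fin N → Bool,
              (∑ i, spin (τ i))^j * (spin b^(2*n-j) * ((2*n).choose j)) :=
            Finset.sum_congr rfl fun j _ => Finset.sum_congr rfl fun b _ =>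
              Finset.sum_congr rfl fun τ _ => by ring
    rw [inner]
    have himg : (range (n+1)).image (fun k => 2*k) ⊆ range (2*n+1) := by
      intro j hj
      simp only [Finset.mem_image, Finset.mem_range] at hj ⊢
      obtain ⟨k, hk, rfl⟩ := hj; omega
    have hzero : ∀ j ∈ range (2*n+1), j ∉ (range (n+1)).image (fun k => 2*k) →
        (∑ τ : Fin N → Bool, (∑ i, spin (τ i))^j) * ((1 + (-1:ℝ)^(2*n-j)) * ((2*n).choose j)) = 0 := by
      intro j hj hnot
      simp only [Finset.mem_range] at hj
      simp only [Finset.mem_image, Finset.mem_range] at hnot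
      have hodd : Odd (2*n - j) := by
        rcases Nat.even_or_odd j with he | ho
        · obtain ⟨m, hm⟩ := he
          exact absurd ⟨m, by omega, by omega⟩ hnot
        · exact Nat.Even.sub_odd (by omega) (by exact ⟨n, by ring⟩) ho
      rw [hodd.neg_one_pow]
      ring
    rw [← Finset.sum_subset himg hzero, Finset.sum_image (by intro a _ b _ h; simp only at h; omega)]
    have heven : ∀ k, ((-1:ℝ))^(2*n - 2*k) = 1 := by
      intro k
      have : Even (2*n - 2*k) := by
        rcases le_or_gt (2*k) (2*n) with h | h
        · exact ⟨n - k, by omega⟩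
        · rw [Nat.sub_eq_zero_of_le (le_of_lt h)]; exact Even.zero
      exact this.neg_one_pow
    calc ∑ k ∈ range (n+1), (∑ τ : Fin N → Bool, (∑ i, spin (τ i))^(2*k))
            * ((1 + (-1:ℝ)^(2*n-2*k)) * ((2*n).choose (2*k)))
        ≤ ∑ k ∈ range (n+1), (2^N * gmom k * N^k) * ((1 + (-1:ℝ)^(2*n-2*k)) * ((2*n).choose (2*k))) := by
          apply Finset.sum_le_sum
          intro k _
          apply mul_le_mul_of_nonneg_right (ih k)
          rw [heven k]
          positivity
      _ = ∑ k ∈ range (n+1), 2^(N+1) * ((gmom k * ((2*n).choose (2*k))) * (N:ℝ)^k) := by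
          apply Finset.sum_congr rfl; intro k _
          rw [heven k]; ring
      _ ≤ ∑ k ∈ range (n+1), 2^(N+1) * ((gmom n * (n.choose k)) * (N:ℝ)^k) := by
          apply Finset.sum_le_sum
          intro k hk
          have hk' : k ≤ n := by simp only [Finset.mem_range] at hk; omega
          have key : gmom k * ((2*n).choose (2*k)) ≤ gmom n * (n.choose k) := by
            have hid := gmom_identity hk'
            have h0 : (0:ℝ) ≤ gmom k * ((2*n).choose (2*k):ℝ) :=
              mul_nonneg (gmom_pos k).le (Nat.cast_nonneg _)
            nlinarith [hid, one_le_gmom (n-k), h0]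
          have hN : (0:ℝ) ≤ (N:ℝ)^k := by positivity
          exact mul_le_mul_of_nonneg_left (mul_le_mul_of_nonneg_right key hN) (by positivity)
      _ = 2^(N+1) * gmom n * (((N:ℝ) + 1)^n) := by
          rw [add_pow]
          rw [Finset.mul_sum]
          apply Finset.sum_congr rfl; intro k _
          ring
      _ = 2^(N+1) * gmom n * ((N+1:ℕ):ℝ)^n := by push_cast; ring

lemma expser (x : ℝ) : Real.exp x = ∑' n, x^n / n.factorial := by
  rw [Real.exp_eq_exp_ℝ, NormedSpace.exp_eq_tsum_div]

lemma central_factorial_le (n : ℕ) : Nat.factorial (2*n) ≤ 2^(2*n) * (Nat.factorial n * Nat.factorial n) := by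
  have h1 : (2*n).choose n * Nat.factorial n * Nat.factorial n = Nat.factorial (2*n) := by
    have := Nat.choose_mul_factorial_mul_factorial (show n ≤ 2*n by omega)
    have e : 2*n - n = n := by omega
    rwa [e] at this
  have h2 : (2*n).choose n ≤ 2^(2*n) := by
    calc (2*n).choose n ≤ ∑ m ∈ range (2*n+1), (2*n).choose m :=
          Finset.single_le_sum (fun m _ => Nat.zero_le _) (by simp [Finset.mem_range]; omega)
      _ = 2^(2*n) := Nat.sum_range_choose (2*n)
  calc Nat.factorial (2*n) = (2*n).choose n * Nat.factorial n * Nat.factorial n := h1.symm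
    _ ≤ 2^(2*n) * Nat.factorial n * Nat.factorial n := by
        exact Nat.mul_le_mul_right _ (Nat.mul_le_mul_right _ h2)
    _ = 2^(2*n) * (Nat.factorial n * Nat.factorial n) := by ring

lemma gmom_div_factorial_le (n : ℕ) : gmom n / (Nat.factorial n : ℝ) ≤ 2^n := by
  rw [gmom, div_div, div_le_iff₀ (by positivity)]
  have := central_factorial_le n
  have hcast : (Nat.factorial (2*n) : ℝ) ≤ 2^(2*n) * (Nat.factorial n * Nat.factorial n) := by
    exact_mod_cast this
  calc (Nat.factorial (2*n) : ℝ) ≤ 2^(2*n) * (Nat.factorial n * Nat.factorial n) := hcast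
    _ = 2^n * (2^n * Nat.factorial n * Nat.factorial n) := by rw [two_mul, pow_add]; ring

lemma exp_moment_bound (N : ℕ) (hN : 1 ≤ N) (l : ℝ) (hl : 0 ≤ l) (hl2 : 2*l < 1) :
    ∑ σ : Fin N → Bool, Real.exp (l * (∑ i, spin (σ i))^2 / N) ≤ 2^N * (1 - 2*l)⁻¹ := by
  have hNpos : (0:ℝ) < N := by exact_mod_cast hN
  have hx : ∀ σ : Fin N → Bool, 0 ≤ l * (∑ i, spin (σ i))^2 / N := by
    intro σ; positivity
  have hsum : ∀ σ : Fin N → Bool,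
      Summable (fun n => (l * (∑ i, spin (σ i))^2 / N)^n / (Nat.factorial n : ℝ)) :=
    fun σ => Real.summable_pow_div_factorial _
  have hswap : ∑ σ : Fin N → Bool, Real.exp (l * (∑ i, spin (σ i))^2 / N)
      = ∑' n : ℕ, ∑ σ : Fin N → Bool, (l * (∑ i, spin (σ i))^2 / N)^n / (Nat.factorial n : ℝ) := by
    rw [Summable.tsum_finsetSum (fun σ _ => hsum σ)]
    exact Finset.sum_congr rfl fun σ _ => expser _
  rw [hswap]
  have hterm : ∀ n : ℕ, ∑ σ : Fin N → Bool, (l * (∑ i, spin (σ i))^2 / N)^n / (Nat.factorial n : ℝ)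
      ≤ 2^N * (2*l)^n := by
    intro n
    have hre : ∀ σ : Fin N → Bool, (l * (∑ i, spin (σ i))^2 / N)^n / (Nat.factorial n : ℝ)
        = (∑ i, spin (σ i))^(2*n) * (l^n / (N^n * Nat.factorial n)) := by
      intro σ
      rw [div_pow, mul_pow, ← pow_mul, mul_comm 2 n, pow_mul]
      field_simp
    simp_rw [hre]
    rw [← Finset.sum_mul]
    have hc : 0 ≤ l^n / ((N:ℝ)^n * Nat.factorial n) := by positivity
    calc (∑ σ : Fin N → Bool, (∑ i, spin (σ i))^(2*n)) * (l^n / ((N:ℝ)^n * Nat.factorial n))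
        ≤ (2^N * gmom n * N^n) * (l^n / ((N:ℝ)^n * Nat.factorial n)) :=
          mul_le_mul_of_nonneg_right (moment_bound N n) hc
      _ = 2^N * (gmom n / Nat.factorial n) * l^n := by
          field_simp
      _ ≤ 2^N * 2^n * l^n := by
          apply mul_le_mul_of_nonneg_right _ (pow_nonneg hl n)
          exact mul_le_mul_of_nonneg_left (gmom_div_factorial_le n) (by positivity)
      _ = 2^N * (2*l)^n := by rw [mul_pow]; ring
  have hgeo : Summable (fun n : ℕ => (2:ℝ)^N * (2*l)^n) := by
    apply Summable.mul_left
    exact summable_geometric_of_lt_one (by linarith) (by linarith)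
  calc ∑' n : ℕ, ∑ σ : Fin N → Bool, (l * (∑ i, spin (σ i))^2 / N)^n / (Nat.factorial n : ℝ)
      ≤ ∑' n : ℕ, (2:ℝ)^N * (2*l)^n := by
        apply Summable.tsum_le_tsum hterm _ hgeo
        apply summable_sum
        intro σ _
        exact hsum σ
    _ = 2^N * (1-2*l)⁻¹ := by
        rw [tsum_mul_left, tsum_geometric_of_lt_one (by linarith) (by linarith)]

lemma poissonWeight_nonneg {ζ : ℝ} (hζ : 0 ≤ ζ) (k : ℕ) : 0 ≤ poissonWeight ζ k := by
  rw [poissonWeight]; positivity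

lemma poissonWeight_eq (ζ : ℝ) (k : ℕ) :
    poissonWeight ζ k = Real.exp (-ζ) * (ζ^k / Nat.factorial k) := by
  rw [poissonWeight, mul_div_assoc]

lemma summable_poisson (ζ : ℝ) : Summable (poissonWeight ζ) := by
  apply Summable.congr ((Real.summable_pow_div_factorial ζ).mul_left (Real.exp (-ζ)))
  intro k
  rw [poissonWeight_eq]

lemma summable_poisson_mul_pow (ζ y : ℝ) :
    Summable (fun k => poissonWeight ζ k * y^k) := by
  apply Summable.congr ((Real.summable_pow_div_factorial (ζ*y)).mul_left (Real.exp (-ζ)))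
  intro k
  rw [poissonWeight_eq, mul_pow]
  field_simp

lemma tsum_poisson_mul_pow (ζ y : ℝ) :
    ∑' k, poissonWeight ζ k * y^k = Real.exp (ζ * (y - 1)) := by
  have h : ∀ k, poissonWeight ζ k * y^k = Real.exp (-ζ) * ((ζ*y)^k / Nat.factorial k) := by
    intro k
    rw [poissonWeight_eq, mul_pow]
    field_simp
  rw [tsum_congr h, tsum_mul_left, ← expser, ← Real.exp_add]
  congr 1
  ring

lemma tsum_poisson (ζ : ℝ) : ∑' k, poissonWeight ζ k = 1 := by
  have := tsum_poisson_mul_pow ζ 1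
  simp at this
  simpa using this

lemma poisson_succ (ζ : ℝ) (n : ℕ) :
    poissonWeight ζ (n+1) * ((n+1 : ℕ) : ℝ) = ζ * poissonWeight ζ n := by
  rw [poissonWeight, poissonWeight, Nat.factorial_succ]
  have h1 : ((n+1 : ℕ) : ℝ) ≠ 0 := by positivity
  have h2 : ((Nat.factorial n : ℕ) : ℝ) ≠ 0 := by
    exact_mod_cast Nat.cast_ne_zero.mpr (Nat.factorial_ne_zero n)
  push_cast
  field_simp
  ring

lemma summable_poisson_mul_id (ζ : ℝ) : Summable (fun k => poissonWeight ζ k * k) := by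
  rw [← summable_nat_add_iff 1]
  apply Summable.congr ((summable_poisson ζ).mul_left ζ)
  intro n
  exact (poisson_succ ζ n).symm

lemma tsum_poisson_mul_id (ζ : ℝ) : ∑' k, poissonWeight ζ k * k = ζ := by
  rw [Summable.tsum_eq_zero_add (summable_poisson_mul_id ζ)]
  simp only [Nat.cast_zero, mul_zero, zero_add]
  have h : ∀ n : ℕ, poissonWeight ζ (n+1) * ((n+1 : ℕ) : ℝ) = ζ * poissonWeight ζ n :=
    poisson_succ ζ
  calc ∑' n : ℕ, poissonWeight ζ (n+1) * ((n+1 : ℕ) : ℝ)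
      = ∑' n : ℕ, ζ * poissonWeight ζ n := tsum_congr h
    _ = ζ * ∑' n, poissonWeight ζ n := tsum_mul_left
    _ = ζ := by rw [tsum_poisson]; ring

lemma Qprod_le (N k : ℕ) (θ : ℝ) (hθ0 : 0 ≤ θ) (hθ1 : θ ≤ 1) (e : Fin k → Fin N × Fin N) :
    Qprod N k θ e ≤ 2^N * (1+θ)^k := by
  rw [Qprod]
  have hbd : ∀ σ : Fin N → Bool,
      ∏ ν : Fin k, (1 + θ * (spin (σ (e ν).1) * spin (σ (e ν).2))) ≤ (1+θ)^k := by
    intro σ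
    rw [← Fin.prod_const k (1+θ)]
    apply Finset.prod_le_prod
    · intro ν _
      rcases spin_pair_cases (σ (e ν).1) (σ (e ν).2) with h | h <;> rw [h] <;> nlinarith
    · intro ν _
      rcases spin_pair_cases (σ (e ν).1) (σ (e ν).2) with h | h <;> rw [h] <;> nlinarith
  calc ∑ σ : Fin N → Bool, ∏ ν : Fin k, (1 + θ * (spin (σ (e ν).1) * spin (σ (e ν).2)))
      ≤ ∑ _σ : Fin N → Bool, (1+θ)^k := Finset.sum_le_sum (fun σ _ => hbd σ)
    _ = 2^N * (1+θ)^k := by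
      rw [Finset.sum_const, Finset.card_univ, Fintype.card_fun, nsmul_eq_mul]
      push_cast
      simp

lemma sum_e_Qprod (N k : ℕ) (θ : ℝ) :
    ∑ e : Fin k → Fin N × Fin N, Qprod N k θ e
      = ∑ σ : Fin N → Bool, ((N:ℝ)^2 + θ * (∑ i, spin (σ i))^2)^k := by
  rw [show (∑ e : Fin k → Fin N × Fin N, Qprod N k θ e)
      = ∑ e : Fin k → Fin N × Fin N, ∑ σ : Fin N → Bool,
        ∏ ν : Fin k, (1 + θ * (spin (σ (e ν).1) * spin (σ (e ν).2))) from rfl]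
  rw [Finset.sum_comm]
  apply Finset.sum_congr rfl
  intro σ _
  have swap := Finset.prod_univ_sum (fun _ : Fin k => (univ : Finset (Fin N × Fin N)))
      (fun _ν p => 1 + θ * (spin (σ p.1) * spin (σ p.2)))
  rw [Fintype.piFinset_univ] at swap
  rw [← swap, Fin.prod_const]
  congr 1
  rw [Finset.sum_add_distrib, ← Finset.mul_sum]
  congr 1
  · rw [Finset.sum_const, Finset.card_univ, Fintype.card_prod, Fintype.card_fin, nsmul_eq_mul]
    push_cast
    ring
  · congr 1
    rw [sq, Finset.sum_mul_sum]
    rw [Fintype.sum_prod_type]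

theorem pressure_minus_symmetric_order_one_over_N
    (α β : ℝ) (hα : 0 < α) (hβ : 0 ≤ β) (hHT : 2 * α * Real.tanh β < 1) :
    ∃ C : ℝ, ∀ N : ℕ, 1 ≤ N →
      0 ≤ pressure N α β - (Real.log 2 + α * Real.log (Real.cosh β))
      ∧ pressure N α β - (Real.log 2 + α * Real.log (Real.cosh β)) ≤ C / N := by
  set θ := Real.tanh β with hθdef
  have hθ0 : 0 ≤ θ := by
    rw [hθdef, Real.tanh_eq_sinh_div_cosh]
    exact div_nonneg (Real.sinh_nonneg_iff.mpr hβ) (Real.cosh_pos β).le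
  have hθ1 : θ < 1 := by
    rw [hθdef, Real.tanh_eq_sinh_div_cosh, div_lt_one (Real.cosh_pos β)]
    nlinarith [Real.cosh_sub_sinh β, Real.exp_pos (-β)]
  set lam := α * θ with hlamdef
  have hlam0 : 0 ≤ lam := mul_nonneg hα.le hθ0
  have hlam1 : 2 * lam < 1 := by rw [hlamdef]; linarith [hHT]
  refine ⟨(1 - 2*lam)⁻¹ - 1, ?_⟩
  intro N hN
  have hN0 : (0:ℝ) < N := by exact_mod_cast hN
  set ζ := α * (N:ℝ) with hζdef
  have hζ0 : 0 ≤ ζ := by positivity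
  set c := Real.cosh β with hcdef
  have hc0 : (0:ℝ) < c := Real.cosh_pos β
  -- basic positivity
  have hQpos : ∀ (k : ℕ) (e : Fin k → Fin N × Fin N), (0:ℝ) < Qprod N k θ e :=
    fun k e => lt_of_lt_of_le (by positivity) (two_pow_le_Qprod N k θ hθ0 e)
  have h2N : (0:ℝ) < 2^N := by positivity
  -- the residual R
  set R : (k : ℕ) → (Fin k → Fin N × Fin N) → ℝ :=
    fun k e => Real.log (Qprod N k θ e) - N * Real.log 2 with hRdef
  have hlogZ : ∀ (k : ℕ) (e : Fin k → Fin N × Fin N),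
      Real.log (partZ N k β e) = k * Real.log c + N * Real.log 2 + R k e := by
    intro k e
    rw [partZ_eq, Real.log_mul (by positivity) (hQpos k e).ne', Real.log_pow]
    simp only [hRdef]
    ring
  have hR0 : ∀ (k : ℕ) (e : Fin k → Fin N × Fin N), 0 ≤ R k e := by
    intro k e
    simp only [hRdef]
    have := Real.log_le_log h2N (two_pow_le_Qprod N k θ hθ0 e)
    rw [Real.log_pow] at this
    simpa using this
  have hRle : ∀ (k : ℕ) (e : Fin k → Fin N × Fin N), R k e ≤ k * Real.log (1+θ) := by
    intro k e
    simp only [hRdef]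
    have h1 : Real.log (Qprod N k θ e) ≤ Real.log (2^N * (1+θ)^k) :=
      Real.log_le_log (hQpos k e) (Qprod_le N k θ hθ0 hθ1.le e)
    rw [Real.log_mul (by positivity) (by positivity), Real.log_pow, Real.log_pow] at h1
    linarith
  -- cardinality of edge space
  have hNpow : ∀ k : ℕ, (0:ℝ) < (N:ℝ)^(2*k) := fun k => by positivity
  have hcard : ∀ k : ℕ, ((Fintype.card (Fin k → Fin N × Fin N)) : ℝ) = (N:ℝ)^(2*k) := by
    intro k
    rw [Fintype.card_fun, Fintype.card_prod, Fintype.card_fin, Fintype.card_fin]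
    push_cast
    rw [pow_mul]
    push_cast
    ring
  set avgR : ℕ → ℝ := fun k => (∑ e : Fin k → Fin N × Fin N, R k e) / (N:ℝ)^(2*k) with havgRdef
  have havgR0 : ∀ k, 0 ≤ avgR k := by
    intro k
    apply div_nonneg _ (hNpow k).le
    exact Finset.sum_nonneg (fun e _ => hR0 k e)
  have havgRle : ∀ k, avgR k ≤ k * Real.log (1+θ) := by
    intro k
    simp only [havgRdef]
    rw [div_le_iff₀ (hNpow k)]
    calc ∑ e : Fin k → Fin N × Fin N, R k e
        ≤ ∑ _e : Fin k → Fin N × Fin N, (k * Real.log (1+θ)) :=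
          Finset.sum_le_sum (fun e _ => hRle k e)
      _ = (k * Real.log (1+θ)) * (N:ℝ)^(2*k) := by
          rw [Finset.sum_const, Finset.card_univ, nsmul_eq_mul, hcard k]; ring
  -- decompose the quenched expectation
  set w : ℕ → ℝ := poissonWeight ζ with hwdef
  have hw0 : ∀ k, 0 ≤ w k := fun k => poissonWeight_nonneg hζ0 k
  have hdecomp : ∀ k : ℕ,
      w k * ((∑ e : Fin k → Fin N × Fin N, Real.log (partZ N k β e)) / (N:ℝ)^(2*k))
      = (w k * k) * Real.log c + w k * ((N:ℝ) * Real.log 2) + w k * avgR k := by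
    intro k
    have hsum : ∑ e : Fin k → Fin N × Fin N, Real.log (partZ N k β e)
        = (N:ℝ)^(2*k) * (k * Real.log c + N * Real.log 2) + ∑ e : Fin k → Fin N × Fin N, R k e := by
      calc ∑ e : Fin k → Fin N × Fin N, Real.log (partZ N k β e)
          = ∑ e : Fin k → Fin N × Fin N, ((k * Real.log c + N * Real.log 2) + R k e) := by
            apply Finset.sum_congr rfl
            intro e _
            rw [hlogZ k e]
        _ = (N:ℝ)^(2*k) * (k * Real.log c + N * Real.log 2) + ∑ e : Fin k → Fin N × Fin N, R k e := by
            rw [Finset.sum_add_distrib, Finset.sum_const, Finset.card_univ, nsmul_eq_mul, hcard k]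
    rw [hsum, add_div, mul_div_cancel_left₀ _ (hNpow k).ne']
    simp only [havgRdef]
    ring
  have S1 : Summable (fun k => (w k * k) * Real.log c) :=
    (summable_poisson_mul_id ζ).mul_right _
  have S2 : Summable (fun k => w k * ((N:ℝ) * Real.log 2)) :=
    (summable_poisson ζ).mul_right _
  have S3le : ∀ k, w k * avgR k ≤ (w k * k) * Real.log (1+θ) := by
    intro k
    calc w k * avgR k ≤ w k * (k * Real.log (1+θ)) :=
          mul_le_mul_of_nonneg_left (havgRle k) (hw0 k)
      _ = (w k * k) * Real.log (1+θ) := by ring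
  have S3 : Summable (fun k => w k * avgR k) :=
    Summable.of_nonneg_of_le (fun k => mul_nonneg (hw0 k) (havgR0 k)) S3le
      ((summable_poisson_mul_id ζ).mul_right _)
  have hquench : quenchedExp N α (fun k e => Real.log (partZ N k β e))
      = ζ * Real.log c + (N:ℝ) * Real.log 2 + ∑' k, w k * avgR k := by
    rw [quenchedExp, tsum_congr hdecomp, Summable.tsum_add (S1.add S2) S3, Summable.tsum_add S1 S2]
    rw [tsum_mul_right, tsum_mul_right, tsum_poisson_mul_id, tsum_poisson]
    ring
  set ER := ∑' k, w k * avgR k with hERdef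
  have hER0 : 0 ≤ ER :=
    tsum_nonneg (fun k => mul_nonneg (hw0 k) (havgR0 k))
  -- upper bound on ER
  set x : (Fin N → Bool) → ℝ := fun σ => 1 + θ * (∑ i, spin (σ i))^2 / (N:ℝ)^2 with hxdef
  set T : ℕ → ℝ := fun k => (∑ e : Fin k → Fin N × Fin N, Qprod N k θ e) / (N:ℝ)^(2*k) with hTdef
  have hT : ∀ k, T k = ∑ σ : Fin N → Bool, (x σ)^k := by
    intro k
    simp only [hTdef]
    rw [sum_e_Qprod, Finset.sum_div]
    apply Finset.sum_congr rfl
    intro σ _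
    rw [pow_mul, ← div_pow]
    congr 1
    simp only [hxdef]
    field_simp
  have havgR_le2 : ∀ k, avgR k ≤ T k / 2^N - 1 := by
    intro k
    have hper : ∀ e : Fin k → Fin N × Fin N, R k e ≤ Qprod N k θ e / 2^N - 1 := by
      intro e
      simp only [hRdef]
      have hlog : Real.log (Qprod N k θ e) - N * Real.log 2 = Real.log (Qprod N k θ e / 2^N) := by
        rw [Real.log_div (hQpos k e).ne' (by positivity), Real.log_pow]
      rw [hlog]
      exact Real.log_le_sub_one_of_pos (div_pos (hQpos k e) h2N)
    simp only [havgRdef]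
    rw [div_le_iff₀ (hNpow k)]
    calc ∑ e : Fin k → Fin N × Fin N, R k e
        ≤ ∑ e : Fin k → Fin N × Fin N, (Qprod N k θ e / 2^N - 1) :=
          Finset.sum_le_sum (fun e _ => hper e)
      _ = (∑ e : Fin k → Fin N × Fin N, Qprod N k θ e) / 2^N - (N:ℝ)^(2*k) := by
          rw [Finset.sum_sub_distrib, ← Finset.sum_div, Finset.sum_const, Finset.card_univ,
            nsmul_eq_mul, hcard k, mul_one]
      _ = (T k / 2^N - 1) * (N:ℝ)^(2*k) := by
          simp only [hTdef]
          field_simp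
  have hxk : ∀ k, w k * (T k / 2^N - 1) = (∑ σ : Fin N → Bool, w k * (x σ)^k) / 2^N - w k := by
    intro k
    rw [hT k, ← Finset.mul_sum]
    field_simp
  have S4 : Summable (fun k => w k * (T k / 2^N - 1)) := by
    apply Summable.congr _ (fun k => (hxk k).symm)
    apply Summable.sub _ (summable_poisson ζ)
    apply Summable.div_const
    apply summable_sum
    intro σ _
    exact summable_poisson_mul_pow ζ (x σ)
  have hERle : ER ≤ (1 - 2*lam)⁻¹ - 1 := by
    have h1 : ER ≤ ∑' k, w k * (T k / 2^N - 1) := by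
      apply Summable.tsum_le_tsum _ S3 S4
      intro k
      exact mul_le_mul_of_nonneg_left (havgR_le2 k) (hw0 k)
    have h2 : ∑' k, w k * (T k / 2^N - 1)
        = (∑ σ : Fin N → Bool, Real.exp (ζ * (x σ - 1))) / 2^N - 1 := by
      rw [tsum_congr hxk]
      rw [Summable.tsum_sub (by
        apply Summable.div_const
        apply summable_sum
        intro σ _
        exact summable_poisson_mul_pow ζ (x σ)) (summable_poisson ζ)]
      rw [tsum_poisson]
      congr 1
      rw [tsum_div_const, Summable.tsum_finsetSum (fun σ _ => summable_poisson_mul_pow ζ (x σ))]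
      congr 1
      exact Finset.sum_congr rfl (fun σ _ => tsum_poisson_mul_pow ζ (x σ))
    have h3 : ∀ σ : Fin N → Bool, ζ * (x σ - 1) = lam * (∑ i, spin (σ i))^2 / N := by
      intro σ
      simp only [hxdef, hζdef, hlamdef]
      field_simp
      ring
    have h4 : (∑ σ : Fin N → Bool, Real.exp (ζ * (x σ - 1))) ≤ 2^N * (1 - 2*lam)⁻¹ := by
      calc (∑ σ : Fin N → Bool, Real.exp (ζ * (x σ - 1)))
          = ∑ σ : Fin N → Bool, Real.exp (lam * (∑ i, spin (σ i))^2 / N) :=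
            Finset.sum_congr rfl (fun σ _ => by rw [h3 σ])
        _ ≤ 2^N * (1 - 2*lam)⁻¹ := exp_moment_bound N hN lam hlam0 hlam1
    calc ER ≤ ∑' k, w k * (T k / 2^N - 1) := h1
      _ = (∑ σ : Fin N → Bool, Real.exp (ζ * (x σ - 1))) / 2^N - 1 := h2
      _ ≤ (2^N * (1 - 2*lam)⁻¹) / 2^N - 1 := by
          apply sub_le_sub_right
          exact (div_le_div_iff_of_pos_right h2N).mpr h4
      _ = (1 - 2*lam)⁻¹ - 1 := by
          rw [mul_comm, mul_div_assoc, div_self h2N.ne', mul_one]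
  -- conclude
  have hpress : pressure N α β - (Real.log 2 + α * Real.log c) = ER / N := by
    rw [pressure, hquench, hζdef]
    field_simp
    ring
  constructor
  · rw [hpress]
    exact div_nonneg hER0 hN0.le
  · rw [hpress]
    calc ER / N ≤ ((1 - 2*lam)⁻¹ - 1) / N := (div_le_div_iff_of_pos_right hN0).mpr hERle
      _ = ((1 - 2*lam)⁻¹ - 1) / N := rfl
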